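/- Let R be a Z-graded k-algebra that is a domain, and suppose dim_k R_n ≥ 2 for some n ≥ 0 and R_{-a} ≠ 0 for some a > 0. Then R_0 contains an element α not in k, so R_0 contains a polynomial ring k[α]; in particular R is not finitely graded (dim_k R_0 = ∞). -/

import Mathlib

/-- An element of a domain algebra over an algebraically closed field that is not a scalar
is transcendental. -/
lemma aux_transcendental {k : Type} [Field k] [IsAlgClosed k]
    {R : Type} [Ring R] [Algebra k R] [IsDomain R]
    {α : R} (hα : α ∉ Set.range (algebraMap k R)) : Transcendental k α := by
  intro halg
  have hint : IsIntegral k α := isAlgebraic_iff_isIntegral.mp halg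
  have hirr := minpoly.irreducible hint
  have hdeg : (minpoly k α).degree = 1 := IsAlgClosed.degree_eq_one_of_irreducible k hirr
  have hmonic : (minpoly k α).Monic := minpoly.monic hint
  have hp : minpoly k α = Polynomial.X + Polynomial.C ((minpoly k α).coeff 0) := by
    have h1 : (minpoly k α).natDegree = 1 := Polynomial.natDegree_eq_of_degree_eq_some hdeg
    conv_lhs => rw [Polynomial.eq_X_add_C_of_natDegree_le_one (by omega : (minpoly k α).natDegree ≤ 1)]
    rw [show (minpoly k α).coeff 1 = 1 from h1 ▸ hmonic.coeff_natDegree, Polynomial.C_1, one_mul]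
  have h0 := minpoly.aeval k α
  rw [hp] at h0
  simp only [map_add, Polynomial.aeval_X, Polynomial.aeval_C] at h0
  exact hα ⟨-((minpoly k α).coeff 0), by
    rw [map_neg]; exact (eq_neg_of_add_eq_zero_left h0).symm⟩

/-- Powers of a transcendental element are linearly independent. -/
lemma aux_linindep {k : Type} [Field k]
    {R : Type} [Ring R] [Algebra k R]
    {α : R} (h : Transcendental k α) : LinearIndependent k (fun n : ℕ => α ^ n) := by
  rw [transcendental_iff] at h
  rw [linearIndependent_iff]
  intro l hl
  have : Polynomial.aeval α (⟨AddMonoidAlgebra.ofCoeff l⟩ : Polynomial k) = 0 := by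
    rw [Polynomial.aeval_def, Polynomial.eval₂_eq_sum, Polynomial.sum_def]
    rw [Finsupp.linearCombination_apply, Finsupp.sum] at hl
    simpa [Algebra.smul_def] using hl
  have := h _ this
  rwa [← Polynomial.ofFinsupp_zero, Polynomial.ofFinsupp.injEq, AddMonoidAlgebra.ofCoeff_eq_zero] at this

theorem stmt_16 (k : Type) [Field k] [IsAlgClosed k]
    (R : Type) [Ring R] [Algebra k R] [IsDomain R]
    (𝒜 : ℤ → Submodule k R) [GradedRing 𝒜]
    (hbig : ∃ n : ℤ, 0 ≤ n ∧ 2 ≤ Module.rank k (𝒜 n))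
    (hneg : ∃ a : ℤ, 0 < a ∧ 𝒜 (-a) ≠ ⊥) :
    (∃ α : R, α ∈ 𝒜 0 ∧ α ∉ Set.range (algebraMap k R) ∧
        LinearIndependent k (fun n : ℕ => α ^ n)) ∧
    ¬ FiniteDimensional k (𝒜 0) := by
  obtain ⟨n, hn0, hn2⟩ := hbig
  obtain ⟨a, ha0, hane⟩ := hneg
  obtain ⟨y, hy, hy0⟩ := (Submodule.ne_bot_iff _).mp hane
  -- a nonzero element of 𝒜 n
  have hAn : (𝒜 n) ≠ ⊥ := by
    intro h
    rw [h] at hn2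
    have : Module.rank k (⊥ : Submodule k R) = 0 := rank_subsingleton' _ _
    rw [this] at hn2
    exact absurd hn2 (by norm_num)
  obtain ⟨x, hx, hx0⟩ := (Submodule.ne_bot_iff _).mp hAn
  -- w = y^N * x^(a-1) has degree -n
  set N : ℕ := n.toNat with hN
  set M : ℕ := (a - 1).toNat with hM
  have hNn : (N : ℤ) = n := Int.toNat_of_nonneg hn0
  have hMa : (M : ℤ) = a - 1 := Int.toNat_of_nonneg (by omega)
  set w : R := y ^ N * x ^ M with hw
  have hwmem : w ∈ 𝒜 (-n) := by
    have h1 : y ^ N ∈ 𝒜 (N • (-a)) := SetLike.pow_mem_graded N hy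
    have h2 : x ^ M ∈ 𝒜 (M • n) := SetLike.pow_mem_graded M hx
    have := SetLike.mul_mem_graded h1 h2
    have heq : (N • (-a) + M • n : ℤ) = -n := by
      simp only [nsmul_eq_mul]
      rw [hNn, hMa]; ring
    rwa [heq] at this
  have hw0 : w ≠ 0 := mul_ne_zero (pow_ne_zero _ hy0) (pow_ne_zero _ hx0)
  -- injective linear map 𝒜 n →ₗ 𝒜 0 by left multiplication by w
  let f : 𝒜 n →ₗ[k] 𝒜 0 :=
    { toFun := fun z => ⟨w * z, by
        simpa using SetLike.mul_mem_graded hwmem z.2⟩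
      map_add' := fun z₁ z₂ => by ext; simp [mul_add]
      map_smul' := fun c z => by ext; simp [mul_smul_comm]
    }
  have hfinj : Function.Injective f := by
    intro z₁ z₂ hz
    have : w * (z₁ : R) = w * (z₂ : R) := congrArg Subtype.val hz
    exact Subtype.ext (mul_left_cancel₀ hw0 this)
  have hrank : 2 ≤ Module.rank k (𝒜 0) :=
    le_trans hn2 (LinearMap.rank_le_of_injective f hfinj)
  -- find an element of 𝒜 0 not in the span of 1
  have h1mem : (1 : R) ∈ 𝒜 0 := SetLike.one_mem_graded 𝒜
  obtain ⟨β, hβ⟩ : ∃ β : 𝒜 0, β ∉ Submodule.span k {(⟨1, h1mem⟩ : 𝒜 0)} := by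
    by_contra h
    push_neg at h
    have htop : Submodule.span k {(⟨1, h1mem⟩ : 𝒜 0)} = ⊤ :=
      Submodule.eq_top_iff'.mpr h
    have hle : Module.rank k (𝒜 0) ≤ 1 := by
      have h' := rank_span_le (R := k) ({(⟨1, h1mem⟩ : 𝒜 0)} : Set (𝒜 0))
      rw [htop] at h'
      rw [← rank_top (R := k) (M := 𝒜 0)]
      simpa using h'
    exact absurd (le_trans hrank hle) (by norm_num)
  set α : R := (β : R) with hα
  have hαmem : α ∈ 𝒜 0 := β.2
  have hαnr : α ∉ Set.range (algebraMap k R) := by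
    rintro ⟨c, hc⟩
    apply hβ
    rw [Submodule.mem_span_singleton]
    refine ⟨c, ?_⟩
    ext
    simp only [SetLike.val_smul]
    rw [← hα, ← hc, Algebra.algebraMap_eq_smul_one]
  have htr : Transcendental k α := aux_transcendental hαnr
  have hli : LinearIndependent k (fun m : ℕ => α ^ m) := aux_linindep htr
  refine ⟨⟨α, hαmem, hαnr, hli⟩, ?_⟩
  -- infinite dimensionality
  intro hfd
  have hpowmem : ∀ m : ℕ, α ^ m ∈ 𝒜 0 := by
    intro m
    have := SetLike.pow_mem_graded m hαmem
    simpa using this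
  let g : ℕ → 𝒜 0 := fun m => ⟨α ^ m, hpowmem m⟩
  have hgli : LinearIndependent k g := by
    apply LinearIndependent.of_comp (𝒜 0).subtype
    convert hli
    rfl
  exact Module.Finite.not_linearIndependent_of_infinite g hgli
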